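/- Let G be a graph with at least one edge and W a non-negative symmetric weight matrix supported on G (i.e., w_{ij} = 0 whenever i ≠ j and ij is not an edge) with W not diagonal. Then 1 + (Σ_{i≠j} w_{ij})/(tr(W) − n·λ_min(W)) ≤ χ_v(G), where λ_min(W) is the smallest eigenvalue of W. -/

import Mathlib

open Matrix Finset
open scoped Kronecker Classical
open scoped Pointwise

lemma sum_mul_entry_nonneg {n : ℕ} (A M : Matrix (Fin n) (Fin n) ℝ)
    (hA : A.PosSemidef) (hM : M.PosSemidef) :
    0 ≤ ∑ i, ∑ j, A i j * M i j := by
  open scoped MatrixOrder in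
  obtain ⟨B, rfl⟩ := CStarAlgebra.nonneg_iff_eq_star_mul_self.mp hA.nonneg
  have key : ∀ k : Fin n, 0 ≤ ∑ i, ∑ j, B k i * B k j * M i j := by
    intro k
    have h := hM.dotProduct_mulVec_nonneg (fun i => B k i)
    simpa [dotProduct, Matrix.mulVec, Finset.mul_sum, mul_assoc, mul_comm, mul_left_comm]
      using h
  calc (0:ℝ) ≤ ∑ k, ∑ i, ∑ j, B k i * B k j * M i j :=
        Finset.sum_nonneg fun k _ => key k
    _ = ∑ i, ∑ j, (Bᴴ * B) i j * M i j := by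
        rw [Finset.sum_comm]
        refine Finset.sum_congr rfl fun i _ => ?_
        rw [Finset.sum_comm]
        refine Finset.sum_congr rfl fun j _ => ?_
        simp [Matrix.mul_apply, Finset.sum_mul]

lemma inner_eq_sum {n : ℕ} (x y : EuclideanSpace ℝ (Fin n)) :
    (inner ℝ x y : ℝ) = ∑ l, x l * y l := by
  simp [PiLp.inner_apply, RCLike.inner_apply, mul_comm]

lemma gram_posSemidef {n : ℕ} (u : Fin n → EuclideanSpace ℝ (Fin n)) :
    (Matrix.of fun i j => (inner ℝ (u i) (u j) : ℝ)).PosSemidef := by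
  refine Matrix.PosSemidef.of_dotProduct_mulVec_nonneg ?_ ?_
  · ext i j
    simp [Matrix.conjTranspose_apply, real_inner_comm, mul_comm]
  · intro x
    have hx : (star x) ⬝ᵥ ((Matrix.of fun i j => (inner ℝ (u i) (u j) : ℝ)) *ᵥ x)
        = ∑ l, (∑ i, x i * u i l)^2 := by
      calc (star x) ⬝ᵥ ((Matrix.of fun i j => (inner ℝ (u i) (u j) : ℝ)) *ᵥ x)
          = ∑ i, ∑ j, ∑ l, (x i * u i l) * (x j * u j l) := by
            simp only [dotProduct, Matrix.mulVec, Matrix.of_apply, Pi.star_apply, star_trivial,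
              inner_eq_sum]
            refine Finset.sum_congr rfl fun i _ => ?_
            rw [Finset.mul_sum]
            refine Finset.sum_congr rfl fun j _ => ?_
            rw [Finset.sum_mul, Finset.mul_sum]
            exact Finset.sum_congr rfl fun l _ => by ring
        _ = ∑ l, ∑ i, ∑ j, (x i * u i l) * (x j * u j l) := by
            rw [show (∑ i, ∑ j, ∑ l, (x i * u i l) * (x j * u j l))
                = ∑ i, ∑ l, ∑ j, (x i * u i l) * (x j * u j l) from
              Finset.sum_congr rfl fun i _ => Finset.sum_comm]
            exact Finset.sum_comm
        _ = ∑ l, (∑ i, x i * u i l)^2 := by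
            refine Finset.sum_congr rfl fun l _ => ?_
            rw [pow_two, Finset.sum_mul_sum]
    rw [hx]
    exact Finset.sum_nonneg fun l _ => sq_nonneg _

lemma shifted_posSemidef {n : ℕ} (W : Matrix (Fin n) (Fin n) ℝ) (hWsymm : W.IsSymm) :
    (W - sInf (spectrum ℝ W) • (1 : Matrix (Fin n) (Fin n) ℝ)).PosSemidef := by
  have hWH : W.IsHermitian := by
    rw [Matrix.IsHermitian, conjTranspose_eq_transpose_of_trivial]
    exact hWsymm
  set c := sInf (spectrum ℝ W) with hc
  have hAH : (W - c • (1 : Matrix (Fin n) (Fin n) ℝ)).IsHermitian := by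
    show _ = _
    ext i j
    simp only [Matrix.conjTranspose_apply, Matrix.sub_apply, Matrix.smul_apply,
      Matrix.one_apply, star_trivial, smul_eq_mul]
    rw [hWsymm.apply i j]
    by_cases h : i = j
    · subst h; simp
    · simp [h, Ne.symm h]
  refine (Matrix.IsHermitian.posSemidef_iff_eigenvalues_nonneg hAH).mpr fun i =>
    show (0:ℝ) ≤ hAH.eigenvalues i from ?_
  have h1 := hAH.eigenvalues_mem_spectrum_real i
  have hAeq : W - c • (1 : Matrix (Fin n) (Fin n) ℝ) = W - algebraMap ℝ _ c := by
    rw [Algebra.algebraMap_eq_smul_one]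
  have h1' : hAH.eigenvalues i ∈ spectrum ℝ W - ({c} : Set ℝ) := by
    rw [spectrum.sub_singleton_eq, ← hAeq]
    exact h1
  obtain ⟨μ, hμ, b, hb, hsub⟩ := Set.mem_sub.mp h1'
  rw [Set.mem_singleton_iff] at hb
  subst hb
  have hle : c ≤ μ := csInf_le (W.finite_spectrum.bddBelow) hμ
  rw [← hsub]
  linarith

lemma simplex_exists {n : ℕ} (hn : 2 ≤ n) :
    ∃ u : Fin n → EuclideanSpace ℝ (Fin n), (∀ i, ‖u i‖ = 1) ∧
      ∀ i j : Fin n, i ≠ j → (inner ℝ (u i) (u j) : ℝ) = -(1/((n:ℝ)-1)) := by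
  have hn2 : (2:ℝ) ≤ (n:ℝ) := by exact_mod_cast hn
  have hn0 : (n:ℝ) ≠ 0 := by
    have : 0 < n := by omega
    exact_mod_cast this.ne'
  have hn1 : (n:ℝ) - 1 ≠ 0 := by nlinarith
  have hfrac : 0 ≤ (n:ℝ)/((n:ℝ)-1) := by
    apply div_nonneg <;> nlinarith
  set s : ℝ := Real.sqrt ((n:ℝ)/((n:ℝ)-1)) with hs
  have hs2 : s * s = (n:ℝ)/((n:ℝ)-1) := Real.mul_self_sqrt hfrac
  set u : Fin n → EuclideanSpace ℝ (Fin n) :=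
    fun i => WithLp.toLp 2 (fun l => s * ((if l = i then 1 else 0) - 1/n)) with hu
  have hul : ∀ i l, u i l = s * ((if l = i then (1:ℝ) else 0) - 1/n) := fun i l => rfl
  refine ⟨u, ?_, ?_⟩
  · intro i
    have hinner : (inner ℝ (u i) (u i) : ℝ) = 1 := by
      rw [inner_eq_sum]
      have hterm : ∀ l : Fin n, u i l * u i l
          = (s*s) * ((if l = i then (1:ℝ) else 0) - 2*(1/n)*(if l = i then 1 else 0) + 1/n^2) := by
        intro l
        rw [hul]
        by_cases h : l = i <;> simp [h] <;> ring
      rw [Finset.sum_congr rfl fun l _ => hterm l, ← Finset.mul_sum]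
      rw [Finset.sum_add_distrib, Finset.sum_sub_distrib, ← Finset.mul_sum]
      simp only [Finset.sum_ite_eq', Finset.mem_univ, if_true, Finset.sum_const,
        Finset.card_univ, Fintype.card_fin, nsmul_eq_mul]
      rw [hs2]
      field_simp
      ring
    have h2 := real_inner_self_eq_norm_mul_norm (u i)
    rw [hinner] at h2
    have := norm_nonneg (u i)
    nlinarith
  · intro i j hij
    rw [inner_eq_sum]
    have hterm : ∀ l : Fin n, u i l * u j l
        = (s*s) * ((if l = i then (1:ℝ) else 0)*(if l = j then 1 else 0)
            - (1/n)*(if l = i then 1 else 0) - (1/n)*(if l = j then 1 else 0) + 1/n^2) := by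
      intro l; rw [hul, hul]; ring
    rw [Finset.sum_congr rfl fun l _ => hterm l, ← Finset.mul_sum]
    have hdd : ∑ l : Fin n, (if l = i then (1:ℝ) else 0)*(if l = j then 1 else 0) = 0 := by
      apply Finset.sum_eq_zero
      intro l _
      by_cases h : l = i
      · subst h; simp [hij]
      · simp [h]
    rw [Finset.sum_add_distrib, Finset.sum_sub_distrib, Finset.sum_sub_distrib, hdd,
      ← Finset.mul_sum, ← Finset.mul_sum]
    simp only [Finset.sum_ite_eq', Finset.mem_univ, if_true, Finset.sum_const,
      Finset.card_univ, Fintype.card_fin, nsmul_eq_mul]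
    rw [hs2]
    field_simp
    ring

/-- Largest eigenvalue (spectral supremum) of a real matrix. -/
noncomputable def lamMax {n : ℕ} (M : Matrix (Fin n) (Fin n) ℝ) : ℝ := sSup (spectrum ℝ M)

/-- Smallest eigenvalue (spectral infimum) of a real matrix. -/
noncomputable def lamMin {n : ℕ} (M : Matrix (Fin n) (Fin n) ℝ) : ℝ := sInf (spectrum ℝ M)

/-- Diagonal matrix of vertex degrees. -/
noncomputable def degMatrix {n : ℕ} (G : SimpleGraph (Fin n)) : Matrix (Fin n) (Fin n) ℝ :=
  Matrix.diagonal fun i => (G.degree i : ℝ)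

/-- The vector chromatic number: the smallest real `k ≥ 2` such that there exist unit
vectors `u i` with `⟪u i, u j⟫ ≤ -1/(k-1)` for all edges `ij`. -/
noncomputable def vecChromNum {V : Type*} [Fintype V] (G : SimpleGraph V) : ℝ :=
  sInf {k : ℝ | 2 ≤ k ∧ ∃ u : V → EuclideanSpace ℝ V,
    (∀ i, ‖u i‖ = 1) ∧ ∀ i j, G.Adj i j → (inner ℝ (u i) (u j) : ℝ) ≤ -(1/(k-1))}

/-- Weighted Lima-type bound: for a non-negative symmetric weight matrix `W` supported on the
graph `G` (and not diagonal), `1 + (∑_{i≠j} w i j)/(tr W - n·lamMin W) ≤ chi_v(G)`. -/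
theorem weighted_lima_bound_vector_chromatic_number {n : ℕ} (G : SimpleGraph (Fin n))
    (he : G.edgeFinset.Nonempty) (W : Matrix (Fin n) (Fin n) ℝ)
    (hW0 : ∀ i j, 0 ≤ W i j) (hWsymm : W.IsSymm)
    (hsupp : ∀ i j, i ≠ j → ¬G.Adj i j → W i j = 0)
    (hnotdiag : ∃ i j, i ≠ j ∧ W i j ≠ 0) :
    1 + (∑ p ∈ Finset.univ.offDiag, W p.1 p.2) / (W.trace - (n : ℝ) * lamMin W) ≤
      vecChromNum G := by
  classical
  -- there exist adjacent vertices, so 2 ≤ n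
  obtain ⟨a, b, hab⟩ : ∃ a b : Fin n, G.Adj a b := by
    obtain ⟨e, he'⟩ := he
    rw [SimpleGraph.mem_edgeFinset] at he'
    induction e with
    | h x y => exact ⟨x, y, he'⟩
  have hn : 2 ≤ n := by
    have h1 : a ≠ b := hab.ne
    have := Fintype.one_lt_card_iff_nontrivial (α := Fin n)
    simp only [Fintype.card_fin] at this
    omega
  -- the defining set is nonempty
  have hSne : {k : ℝ | 2 ≤ k ∧ ∃ u : Fin n → EuclideanSpace ℝ (Fin n),
      (∀ i, ‖u i‖ = 1) ∧ ∀ i j, G.Adj i j → (inner ℝ (u i) (u j) : ℝ) ≤ -(1/(k-1))}.Nonempty := by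
    obtain ⟨u, hu1, hu2⟩ := simplex_exists hn
    refine ⟨(n : ℝ), ⟨by exact_mod_cast hn, u, hu1, ?_⟩⟩
    intro i j hij
    rw [hu2 i j hij.ne]
  set c := lamMin W with hc
  set N := ∑ p ∈ Finset.univ.offDiag, W p.1 p.2 with hN
  have hN0 : 0 ≤ N := Finset.sum_nonneg fun p _ => hW0 _ _
  set d := W.trace - (n : ℝ) * c with hd
  refine le_csInf hSne ?_
  rintro k ⟨hk2, u, hu1, hu2⟩
  rcases le_or_gt d 0 with hd0 | hd0
  · have : N / d ≤ 0 := div_nonpos_of_nonneg_of_nonpos hN0 hd0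
    linarith
  · -- main argument
    have hk1 : (0:ℝ) < k - 1 := by linarith
    set M := Matrix.of fun i j => (inner ℝ (u i) (u j) : ℝ) with hM
    have hMpsd := gram_posSemidef u
    have hApsd := shifted_posSemidef W hWsymm
    set A := W - c • (1 : Matrix (Fin n) (Fin n) ℝ) with hA
    have key : (0:ℝ) ≤ ∑ i, ∑ j, A i j * M i j := sum_mul_entry_nonneg A M hApsd hMpsd
    -- split diagonal and off-diagonal
    have hsplit : ∑ i, ∑ j, A i j * M i j
        = (∑ i, A i i * M i i) + ∑ p ∈ Finset.univ.offDiag, A p.1 p.2 * M p.1 p.2 := by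
      rw [← Finset.sum_product']
      rw [← Finset.diag_union_offDiag (Finset.univ : Finset (Fin n)),
        Finset.sum_union (Finset.disjoint_diag_offDiag _), Finset.sum_diag]
    -- diagonal part equals d
    have hMdiag : ∀ i, M i i = 1 := by
      intro i
      show (inner ℝ (u i) (u i) : ℝ) = 1
      rw [real_inner_self_eq_norm_mul_norm, hu1 i, one_mul]
    have hdiag : ∑ i, A i i * M i i = d := by
      have : ∀ i, A i i * M i i = W i i - c := by
        intro i
        rw [hMdiag i]
        simp [hA, Matrix.one_apply]
      rw [Finset.sum_congr rfl fun i _ => this i, Finset.sum_sub_distrib]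
      simp [hd, Matrix.trace, Matrix.diag, Finset.sum_const, Finset.card_univ, mul_comm]
    -- off-diagonal bound
    have hoff : ∑ p ∈ Finset.univ.offDiag, A p.1 p.2 * M p.1 p.2 ≤ N * (-(1/(k-1))) := by
      rw [hN, Finset.sum_mul]
      apply Finset.sum_le_sum
      intro p hp
      have hpne : p.1 ≠ p.2 := (Finset.mem_offDiag.mp hp).2.2
      have hAp : A p.1 p.2 = W p.1 p.2 := by
        simp [hA, Matrix.one_apply, hpne]
      rw [hAp]
      by_cases hadj : G.Adj p.1 p.2
      · have hm := hu2 p.1 p.2 hadj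
        have : M p.1 p.2 = (inner ℝ (u p.1) (u p.2) : ℝ) := rfl
        rw [this]
        exact mul_le_mul_of_nonneg_left hm (hW0 _ _)
      · rw [hsupp _ _ hpne hadj]
        simp
    have hkey2 : 0 ≤ d + N * (-(1/(k-1))) := by
      rw [hsplit, hdiag] at key
      linarith
    -- conclude
    have h1 : N / (k-1) ≤ d := by
      have hrw : N / (k-1) = N * (1/(k-1)) := by field_simp
      rw [hrw]
      linarith
    have h2 : N ≤ d * (k-1) := (div_le_iff₀ hk1).mp h1
    have h3 : N / d ≤ k - 1 := by
      rw [div_le_iff₀ hd0]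
      linarith
    linarith
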